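/- For all (x,t) ∈ ℝ², the second-order non-symmetric rogue wave satisfies |q^[2](x,t)| < 5. Thus the maximal amplitude amplification of the non-symmetric second-order rogue wave (equal to about 4.695, attained at (0.372, 0)) is strictly smaller than the amplification factor 5 of the symmetric second-order Akhmediev–Peregrine solution. -/

import Mathlib

set_option maxHeartbeats 16000000
set_option maxRecDepth 100000

open Complex

noncomputable section

/-- The denominator `H2` of the second-order non-symmetric rogue wave. -/
def H2 (x t : ℝ) : ℝ :=
  1024 * t ^ 6 + 768 * x ^ 2 * t ^ 4 - 768 * t ^ 4 * x + 1920 * t ^ 4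
    + 192 * x ^ 4 * t ^ 2 - 384 * x ^ 3 * t ^ 2 + 288 * x * t ^ 2 + 288 * t ^ 2
    + 16 * x ^ 6 - 48 * x ^ 5 + 72 * x ^ 4 - 72 * x ^ 3 + 72 * x ^ 2 - 36 * x + 9

/-- The numerator `F2` of the second-order non-symmetric rogue wave:
`F2 = 12i√2·(A + i·B)` with real polynomials `A`, `B`. -/
def F2 (x t : ℝ) : ℂ :=
  12 * Complex.I * ((Real.sqrt 2 : ℝ) : ℂ) *
    (((12 * t - 32 * t ^ 3 - 12 * x * t + 16 * x ^ 3 * t + 64 * t ^ 3 * x - 8 * x ^ 4 * t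
          - 64 * x ^ 2 * t ^ 3 - 128 * t ^ 5 : ℝ) : ℂ)
      + Complex.I *
        ((48 * x ^ 2 * t ^ 2 - 4 * x ^ 3 + 6 * x ^ 2 + 160 * t ^ 4 - 48 * x * t ^ 2
            + 48 * t ^ 2 + 2 * x ^ 4 - 3 * x : ℝ) : ℂ))

/-- The second-order non-symmetric doubly-localized rogue wave
`q^[2](x,t) = √2·(√2/2 + F2/H2)·e^{2it}` of the focusing NLS equation. -/
def qtwo (p : ℝ × ℝ) : ℂ :=
  ((Real.sqrt 2 : ℝ) : ℂ)
    * (((Real.sqrt 2 / 2 : ℝ) : ℂ) + F2 p.1 p.2 / ((H2 p.1 p.2 : ℝ) : ℂ))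
    * Complex.exp (2 * Complex.I * (p.2 : ℂ))

lemma H2_pos (x t : ℝ) : 0 < H2 x t := by
  have h : H2 x t = 1 +
      ((4170711/576460752303423488)*((-348585)*x^3 + (1095463)*x^2 + (2907232)*x*t^2 + (-2372642)*x + (-2258336)*t^2 + (1048576))^2
      + (15313907/1152921504606846976)*((470389)*x^3 + (-1044707)*x^2 + (642036)*x*t^2 + (1048576)*x + (1812464)*t^2)^2
      + (12428229/144115188075855872)*((-325341)*x^3 + (524288)*x^2 + (-1540296)*x*t^2 + (1200312)*t^2)^2
      + (788745/18014398509481984)*((262144)*x^3 + (-47900)*x*t^2 + (-3045655)*t^2)^2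
      + (46860131/72057594037927936)*((-327833)*x*t^2 + (1048576)*t^2)^2
      + (3387825/16384)*(x*t^2)^2
      + (42216407/144115188075855872)*((-47199)*x^2*t + (188608)*x*t + (965816)*t^3 + (1048576)*t)^2
      + (20416053/18014398509481984)*((-276911)*x^2*t + (262144)*x*t + (-96645)*t^3)^2
      + (6704099/17592186044416)*((8192)*x^2*t + (29683)*t^3)^2
      + (822313/2048)*(t^3)^2
      + (280761/274877906944)*((-1)*x + (1))^2
      + (4066237/1649267441664)*(x^2 + (1))^2
      + (864239/549755813888)*(x^3 + (1))^2
      + (109899/68719476736)*((4)*t^2 + (1))^2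
      + (158299/68719476736)*((4)*x*t^2 + (1))^2
      + (2433003508527/288230376151711744)*((-1)*x^2 + x)^2
      + (1020410694433/288230376151711744)*(x^3 + x)^2
      + (99221905403/36028797018963968)*(x + (-4)*t^2)^2
      + (629557600845/252201579132747776)*((-4)*x*t^2 + x)^2
      + (3277751209697/1152921504606846976)*((-1)*x^3 + x^2)^2
      + (4058882608611/2017612633061982208)*(x^2 + (-4)*t^2)^2
      + (8286293749915/1152921504606846976)*(x^2 + (-4)*x*t^2)^2
      + (1631361559455/288230376151711744)*(x^3 + (4)*t^2)^2
      + (10866718649159/3458764513820540928)*(x^3 + (4)*x*t^2)^2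
      + (1450566511611/18014398509481984)*(x*t^2 + t^2)^2
      + (306181/2147483648)*((-1)*x*t + t)^2
      + (35153537/962072674304)*((-1)*x^2*t + t)^2
      + (10382545/68719476736)*((-4)*t^3 + t)^2
      + (15108084261/2251799813685248)*((-1)*x^2*t + x*t)^2
      + (82868312563/1125899906842624)*(x*t + (-4)*t^3)^2
      + (236912288855/27021597764222976)*(x^2*t + (4)*t^3)^2
      + (4637648777/103079215104)*((1))^2
      + (136145647146091453/3026418949592973312)*(x)^2
      + (1089182567279634103/24211351596743786496)*(x^2)^2
      + (155585946085586851/3458764513820540928)*(x^3)^2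
      + (22686312030830753/31525197391593472)*(t^2)^2
      + (544678106140769683/756604737398243328)*(x*t^2)^2
      + (172855696721/962072674304)*(t)^2
      + (2832919644691315/15762598695796736)*(x*t)^2
      + (544654800765871493/3026418949592973312)*(x^2*t)^2
      + (155378398969564913/54043195528445952)*(t^3)^2) := by
    unfold H2; ring
  rw [h]; positivity

lemma key_ineq (x t : ℝ) :
    (H2 x t - 24*(48*x^(2:ℕ)*t^(2:ℕ) - 4*x^(3:ℕ) + 6*x^(2:ℕ) + 160*t^(4:ℕ) - 48*x*t^(2:ℕ) + 48*t^(2:ℕ) + 2*x^(4:ℕ) - 3*x))^(2:ℕ) + (24*(12*t - 32*t^(3:ℕ) - 12*x*t + 16*x^(3:ℕ)*t + 64*t^(3:ℕ)*x - 8*x^(4:ℕ)*t - 64*x^(2:ℕ)*t^(3:ℕ) - 128*t^(5:ℕ)))^(2:ℕ) < 25 * (H2 x t)^(2:ℕ) := by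
  have h : (0:ℝ) < 25 * (H2 x t)^(2:ℕ) - ((H2 x t - 24*(48*x^(2:ℕ)*t^(2:ℕ) - 4*x^(3:ℕ) + 6*x^(2:ℕ) + 160*t^(4:ℕ) - 48*x*t^(2:ℕ) + 48*t^(2:ℕ) + 2*x^(4:ℕ) - 3*x))^(2:ℕ) + (24*(12*t - 32*t^(3:ℕ) - 12*x*t + 16*x^(3:ℕ)*t + 64*t^(3:ℕ)*x - 8*x^(4:ℕ)*t - 64*x^(2:ℕ)*t^(3:ℕ) - 128*t^(5:ℕ)))^(2:ℕ)) := by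
    have e : 25 * (H2 x t)^(2:ℕ) - ((H2 x t - 24*(48*x^(2:ℕ)*t^(2:ℕ) - 4*x^(3:ℕ) + 6*x^(2:ℕ) + 160*t^(4:ℕ) - 48*x*t^(2:ℕ) + 48*t^(2:ℕ) + 2*x^(4:ℕ) - 3*x))^(2:ℕ) + (24*(12*t - 32*t^(3:ℕ) - 12*x*t + 16*x^(3:ℕ)*t + 64*t^(3:ℕ)*x - 8*x^(4:ℕ)*t - 64*x^(2:ℕ)*t^(3:ℕ) - 128*t^(5:ℕ)))^(2:ℕ)) = 1 +
      ((1018219725/576460752303423488)*((707893)*x^(6:ℕ) + (-4068675)*x^(5:ℕ) + (6552500)*x^(4:ℕ)*t^(2:ℕ) + (6220596)*x^(4:ℕ) + (-14181588)*x^(3:ℕ)*t^(2:ℕ) + (-4489211)*x^(3:ℕ) + (66171200)*x^(2:ℕ)*t^(4:ℕ) + (8147496)*x^(2:ℕ)*t^(2:ℕ) + (5771070)*x^(2:ℕ) + (-38727920)*x*t^(4:ℕ) + (-8322792)*x*t^(2:ℕ) + (-4548275)*x + (6174656)*t^(6:ℕ) + (-8885712)*t^(4:ℕ) + (760156)*t^(2:ℕ)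 + (1048576))^(2:ℕ)
      + (3608062437/576460752303423488)*((-262474)*x^(6:ℕ) + (800371)*x^(5:ℕ) + (-4410380)*x^(4:ℕ)*t^(2:ℕ) + (-1228402)*x^(4:ℕ) + (2487896)*x^(3:ℕ)*t^(2:ℕ) + (2933793)*x^(3:ℕ) + (8177552)*x^(2:ℕ)*t^(4:ℕ) + (1466636)*x^(2:ℕ)*t^(2:ℕ) + (-3648628)*x^(2:ℕ) + (36255152)*x*t^(4:ℕ) + (-8127388)*x*t^(2:ℕ) + (1048576)*x + (616832)*t^(6:ℕ) + (-38763776)*t^(4:ℕ) + (-120656)*t^(2:ℕ))^(2:ℕ)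
      + (2207791701/288230376151711744)*((75308)*x^(6:ℕ) + (-744947)*x^(5:ℕ) + (2463812)*x^(4:ℕ)*t^(2:ℕ) + (2686231)*x^(4:ℕ) + (1762076)*x^(3:ℕ)*t^(2:ℕ) + (-3183805)*x^(3:ℕ) + (2744800)*x^(2:ℕ)*t^(4:ℕ) + (2346244)*x^(2:ℕ)*t^(2:ℕ) + (1048576)*x^(2:ℕ) + (8627120)*x*t^(4:ℕ) + (-3973868)*x*t^(2:ℕ) + (1735680)*t^(6:ℕ) + (11406912)*t^(4:ℕ) + (-896400)*t^(2:ℕ))^(2:ℕ)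
      + (17568972641/288230376151711744)*((-35643)*x^(6:ℕ) + (373146)*x^(5:ℕ) + (-612074)*x^(4:ℕ)*t^(2:ℕ) + (-765703)*x^(4:ℕ) + (455992)*x^(3:ℕ)*t^(2:ℕ) + (524288)*x^(3:ℕ) + (-2273768)*x^(2:ℕ)*t^(4:ℕ) + (-682050)*x^(2:ℕ)*t^(2:ℕ) + (-3960360)*x*t^(4:ℕ) + (1089292)*x*t^(2:ℕ) + (-502784)*t^(6:ℕ) + (412472)*t^(4:ℕ) + (-487470)*t^(2:ℕ))^(2:ℕ)
      + (7075085231/144115188075855872)*((238739)*x^(6:ℕ) + (-676823)*x^(5:ℕ) + (1207148)*x^(4:ℕ)*t^(2:ℕ) + (524288)*x^(4:ℕ) + (-2540970)*x^(3:ℕ)*t^(2:ℕ) + (1490288)*x^(2:ℕ)*t^(4:ℕ) + (318946)*x^(2:ℕ)*t^(2:ℕ) + (-6836960)*x*t^(4:ℕ) + (1288494)*x*t^(2:ℕ) + (42496)*t^(6:ℕ) + (1745784)*t^(4:ℕ) + (532048)*t^(2:ℕ))^(2:ℕ)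
      + (700217893/144115188075855872)*((-560705)*x^(6:ℕ) + (1048576)*x^(5:ℕ) + (-2505756)*x^(4:ℕ)*t^(2:ℕ) + (4316320)*x^(3:ℕ)*t^(2:ℕ) + (-24742752)*x^(2:ℕ)*t^(4:ℕ) + (-9074240)*x^(2:ℕ)*t^(2:ℕ) + (40107504)*x*t^(4:ℕ) + (7689188)*x*t^(2:ℕ) + (-1949888)*t^(6:ℕ) + (-18237952)*t^(4:ℕ) + (4418876)*t^(2:ℕ))^(2:ℕ)
      + (49835243/9007199254740992)*((262144)*x^(6:ℕ) + (365203)*x^(4:ℕ)*t^(2:ℕ) + (-537555)*x^(3:ℕ)*t^(2:ℕ) + (7478600)*x^(2:ℕ)*t^(4:ℕ) + (2760582)*x^(2:ℕ)*t^(2:ℕ) + (-7886644)*x*t^(4:ℕ) + (-3027931)*x*t^(2:ℕ) + (661408)*t^(6:ℕ) + (4760648)*t^(4:ℕ) + (-1047712)*t^(2:ℕ))^(2:ℕ)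
      + (2320480089/1125899906842624)*((150331)*x^(4:ℕ)*t^(2:ℕ) + (-359056)*x^(3:ℕ)*t^(2:ℕ) + (-247136)*x^(2:ℕ)*t^(4:ℕ) + (308797)*x^(2:ℕ)*t^(2:ℕ) + (552428)*x*t^(4:ℕ) + (-884)*x*t^(2:ℕ) + (5664)*t^(6:ℕ) + (2761300)*t^(4:ℕ) + (1048576)*t^(2:ℕ))^(2:ℕ)
      + (11248587443/4503599627370496)*((-44600)*x^(4:ℕ)*t^(2:ℕ) + (89559)*x^(3:ℕ)*t^(2:ℕ) + (1324378)*x^(2:ℕ)*t^(4:ℕ) + (-390301)*x^(2:ℕ)*t^(2:ℕ) + (-266208)*x*t^(4:ℕ) + (524288)*x*t^(2:ℕ) + (-60872)*t^(6:ℕ) + (2816760)*t^(4:ℕ))^(2:ℕ)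
      + (414176309/2251799813685248)*((-112594)*x^(4:ℕ)*t^(2:ℕ) + (-554855)*x^(3:ℕ)*t^(2:ℕ) + (907500)*x^(2:ℕ)*t^(4:ℕ) + (1048576)*x^(2:ℕ)*t^(2:ℕ) + (136376)*x*t^(4:ℕ) + (-257104)*t^(6:ℕ) + (111316)*t^(4:ℕ))^(2:ℕ)
      + (12870064703/36028797018963968)*((-619391)*x^(4:ℕ)*t^(2:ℕ) + (1048576)*x^(3:ℕ)*t^(2:ℕ) + (-693540)*x^(2:ℕ)*t^(4:ℕ) + (1669468)*x*t^(4:ℕ) + (-47600)*t^(6:ℕ) + (-1412436)*t^(4:ℕ))^(2:ℕ)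
      + (3148431039/4503599627370496)*((262144)*x^(4:ℕ)*t^(2:ℕ) + (914505)*x^(2:ℕ)*t^(4:ℕ) + (374007)*x*t^(4:ℕ) + (-79840)*t^(6:ℕ) + (-1418511)*t^(4:ℕ))^(2:ℕ)
      + (3794818781/4503599627370496)*((295453)*x^(2:ℕ)*t^(4:ℕ) + (-1953255)*x*t^(4:ℕ) + (-837504)*t^(6:ℕ) + (1048576)*t^(4:ℕ))^(2:ℕ)
      + (7968595567/2251799813685248)*((-359533)*x^(2:ℕ)*t^(4:ℕ) + (1048576)*x*t^(4:ℕ) + (-275008)*t^(6:ℕ))^(2:ℕ)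
      + (231151087/1099511627776)*((16384)*x^(2:ℕ)*t^(4:ℕ) + (-155239)*t^(6:ℕ))^(2:ℕ)
      + (4884777479/256)*(t^(6:ℕ))^(2:ℕ)
      + (7784179405/144115188075855872)*((-468691)*x^(5:ℕ)*t + (1107565)*x^(4:ℕ)*t + (-5298712)*x^(3:ℕ)*t^(3:ℕ) + (-148480)*x^(3:ℕ)*t + (8184764)*x^(2:ℕ)*t^(3:ℕ) + (-665338)*x^(2:ℕ)*t + (2666992)*x*t^(5:ℕ) + (80576)*x*t^(3:ℕ) + (-1253560)*x*t + (23073904)*t^(5:ℕ) + (2632920)*t^(3:ℕ) + (1048576)*t)^(2:ℕ)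
      + (40565645767/288230376151711744)*((23755)*x^(5:ℕ)*t + (69742)*x^(4:ℕ)*t + (-641124)*x^(3:ℕ)*t^(3:ℕ) + (-122940)*x^(3:ℕ)*t + (-1400476)*x^(2:ℕ)*t^(3:ℕ) + (-332557)*x^(2:ℕ)*t + (-2635232)*x*t^(5:ℕ) + (2356852)*x*t^(3:ℕ) + (1048576)*x*t + (16250768)*t^(5:ℕ) + (7139548)*t^(3:ℕ))^(2:ℕ)
      + (14296909419/72057594037927936)*((-402173)*x^(5:ℕ)*t + (807713)*x^(4:ℕ)*t + (-1258884)*x^(3:ℕ)*t^(3:ℕ) + (-1096754)*x^(3:ℕ)*t + (1850376)*x^(2:ℕ)*t^(3:ℕ) + (1048576)*x^(2:ℕ)*t + (-9738464)*x*t^(5:ℕ) + (-2369564)*x*t^(3:ℕ) + (10421104)*t^(5:ℕ) + (3655116)*t^(3:ℕ))^(2:ℕ)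
      + (5795400463/72057594037927936)*((169776)*x^(5:ℕ)*t + (-959899)*x^(4:ℕ)*t + (440932)*x^(3:ℕ)*t^(3:ℕ) + (1048576)*x^(3:ℕ)*t + (360812)*x^(2:ℕ)*t^(3:ℕ) + (6335776)*x*t^(5:ℕ) + (378320)*x*t^(3:ℕ) + (1754912)*t^(5:ℕ) + (-305612)*t^(3:ℕ))^(2:ℕ)
      + (4095797069/2251799813685248)*((-103019)*x^(5:ℕ)*t + (262144)*x^(4:ℕ)*t + (-296575)*x^(3:ℕ)*t^(3:ℕ) + (780150)*x^(2:ℕ)*t^(3:ℕ) + (-723376)*x*t^(5:ℕ) + (-578445)*x*t^(3:ℕ) + (763596)*t^(5:ℕ) + (-645204)*t^(3:ℕ))^(2:ℕ)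
      + (315391597/9007199254740992)*((262144)*x^(5:ℕ)*t + (-3557076)*x^(3:ℕ)*t^(3:ℕ) + (-1366060)*x^(2:ℕ)*t^(3:ℕ) + (7105804)*x*t^(5:ℕ) + (4089489)*x*t^(3:ℕ) + (-5549812)*t^(5:ℕ) + (-1600799)*t^(3:ℕ))^(2:ℕ)
      + (19999858589/18014398509481984)*((492085)*x^(3:ℕ)*t^(3:ℕ) + (-1039398)*x^(2:ℕ)*t^(3:ℕ) + (-1717012)*x*t^(5:ℕ) + (835300)*x*t^(3:ℕ) + (-1627480)*t^(5:ℕ) + (1048576)*t^(3:ℕ))^(2:ℕ)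
      + (5141249727/9007199254740992)*((896617)*x^(3:ℕ)*t^(3:ℕ) + (136716)*x^(2:ℕ)*t^(3:ℕ) + (1237592)*x*t^(5:ℕ) + (1048576)*x*t^(3:ℕ) + (-513976)*t^(5:ℕ))^(2:ℕ)
      + (88184887/562949953421312)*((-1269829)*x^(3:ℕ)*t^(3:ℕ) + (1048576)*x^(2:ℕ)*t^(3:ℕ) + (-5304828)*x*t^(5:ℕ) + (-3168108)*t^(5:ℕ))^(2:ℕ)
      + (410881571/562949953421312)*((262144)*x^(3:ℕ)*t^(3:ℕ) + (1596246)*x*t^(5:ℕ) + (153507)*t^(5:ℕ))^(2:ℕ)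
      + (165837023/17592186044416)*((20517)*x*t^(5:ℕ) + (131072)*t^(5:ℕ))^(2:ℕ)
      + (320283513/1024)*(x*t^(5:ℕ))^(2:ℕ)
      + (343531863/549755813888)*(x + (1))^(2:ℕ)
      + (135369991/824633720832)*(x^(2:ℕ) + (1))^(2:ℕ)
      + (224821247/549755813888)*(x^(3:ℕ) + (1))^(2:ℕ)
      + (536591053/687194767360)*((-1)*x^(4:ℕ) + (1))^(2:ℕ)
      + (836157451/1649267441664)*((-1)*x^(5:ℕ) + (1))^(2:ℕ)
      + (407366679/3848290697216)*((-1)*x^(6:ℕ) + (1))^(2:ℕ)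
      + (508573781/549755813888)*((4)*t^(2:ℕ) + (1))^(2:ℕ)
      + (150315015/274877906944)*((-4)*x*t^(2:ℕ) + (1))^(2:ℕ)
      + (1586913097/2473901162496)*((-4)*x^(2:ℕ)*t^(2:ℕ) + (1))^(2:ℕ)
      + (343326125/1649267441664)*((-4)*x^(3:ℕ)*t^(2:ℕ) + (1))^(2:ℕ)
      + (300351543/549755813888)*((4)*x^(4:ℕ)*t^(2:ℕ) + (1))^(2:ℕ)
      + (460278649/549755813888)*((16)*t^(4:ℕ) + (1))^(2:ℕ)
      + (2347822863/2748779069440)*((16)*x*t^(4:ℕ) + (1))^(2:ℕ)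
      + (1056658511/2061584302080)*((-16)*x^(2:ℕ)*t^(4:ℕ) + (1))^(2:ℕ)
      + (3562244603/3848290697216)*((64)*t^(6:ℕ) + (1))^(2:ℕ)
      + (696529978414601/288230376151711744)*(x^(2:ℕ) + x)^(2:ℕ)
      + (4937976590007937/2882303761517117440)*((-1)*x^(3:ℕ) + x)^(2:ℕ)
      + (1660674843539969/432345564227567616)*(x^(4:ℕ) + x)^(2:ℕ)
      + (219569620989597/4035225266123964416)*(x^(5:ℕ) + x)^(2:ℕ)
      + (678247129174531/576460752303423488)*(x^(6:ℕ) + x)^(2:ℕ)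
      + (1578873417515375/576460752303423488)*(x + (-4)*t^(2:ℕ))^(2:ℕ)
      + (5466937632872947/2594073385365405696)*((-4)*x*t^(2:ℕ) + x)^(2:ℕ)
      + (4919386265282393/864691128455135232)*((4)*x^(2:ℕ)*t^(2:ℕ) + x)^(2:ℕ)
      + (2429162626688515/576460752303423488)*((-4)*x^(3:ℕ)*t^(2:ℕ) + x)^(2:ℕ)
      + (1130242965901429/576460752303423488)*((-4)*x^(4:ℕ)*t^(2:ℕ) + x)^(2:ℕ)
      + (3998328325204487/2882303761517117440)*(x + (-16)*t^(4:ℕ))^(2:ℕ)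
      + (34075915383628919/8646911284551352320)*((-16)*x*t^(4:ℕ) + x)^(2:ℕ)
      + (735277282275827/144115188075855872)*((16)*x^(2:ℕ)*t^(4:ℕ) + x)^(2:ℕ)
      + (552914204290359/576460752303423488)*(x + (-64)*t^(6:ℕ))^(2:ℕ)
      + (4910247708673655/864691128455135232)*((-1)*x^(3:ℕ) + x^(2:ℕ))^(2:ℕ)
      + (165248259177401/15762598695796736)*(x^(4:ℕ) + x^(2:ℕ))^(2:ℕ)
      + (1031270226824897/288230376151711744)*((-1)*x^(5:ℕ) + x^(2:ℕ))^(2:ℕ)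
      + (6264982280748431/1441151880758558720)*((-1)*x^(6:ℕ) + x^(2:ℕ))^(2:ℕ)
      + (1952156474334277/2594073385365405696)*(x^(2:ℕ) + (-4)*t^(2:ℕ))^(2:ℕ)
      + (256688153595817/27021597764222976)*(x^(2:ℕ) + (4)*x*t^(2:ℕ))^(2:ℕ)
      + (349726351579411/36028797018963968)*((-4)*x^(2:ℕ)*t^(2:ℕ) + x^(2:ℕ))^(2:ℕ)
      + (1545877161534107/288230376151711744)*((4)*x^(3:ℕ)*t^(2:ℕ) + x^(2:ℕ))^(2:ℕ)
      + (16858681208667821/4323455642275676160)*((4)*x^(4:ℕ)*t^(2:ℕ) + x^(2:ℕ))^(2:ℕ)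
      + (3144332108751127/4323455642275676160)*(x^(2:ℕ) + (-16)*t^(4:ℕ))^(2:ℕ)
      + (364804776145715/288230376151711744)*(x^(2:ℕ) + (16)*x*t^(4:ℕ))^(2:ℕ)
      + (991864608400597/144115188075855872)*((-16)*x^(2:ℕ)*t^(4:ℕ) + x^(2:ℕ))^(2:ℕ)
      + (16277373915445327/4323455642275676160)*(x^(2:ℕ) + (-64)*t^(6:ℕ))^(2:ℕ)
      + (667376936766547/144115188075855872)*((-1)*x^(4:ℕ) + x^(3:ℕ))^(2:ℕ)
      + (4945799202482379/1441151880758558720)*(x^(5:ℕ) + x^(3:ℕ))^(2:ℕ)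
      + (2656630665154709/576460752303423488)*(x^(6:ℕ) + x^(3:ℕ))^(2:ℕ)
      + (10158855898522639/1729382256910270464)*(x^(3:ℕ) + (4)*t^(2:ℕ))^(2:ℕ)
      + (15068145966634041/576460752303423488)*(x^(3:ℕ) + (-4)*x*t^(2:ℕ))^(2:ℕ)
      + (5203528711852713/576460752303423488)*(x^(3:ℕ) + (4)*x^(2:ℕ)*t^(2:ℕ))^(2:ℕ)
      + (34212628923962107/8646911284551352320)*((4)*x^(3:ℕ)*t^(2:ℕ) + x^(3:ℕ))^(2:ℕ)
      + (3079483097172493/432345564227567616)*((-4)*x^(4:ℕ)*t^(2:ℕ) + x^(3:ℕ))^(2:ℕ)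
      + (6623617563389899/576460752303423488)*(x^(3:ℕ) + (-16)*t^(4:ℕ))^(2:ℕ)
      + (298079006000095/288230376151711744)*(x^(3:ℕ) + (16)*x*t^(4:ℕ))^(2:ℕ)
      + (12280925694843211/576460752303423488)*(x^(3:ℕ) + (16)*x^(2:ℕ)*t^(4:ℕ))^(2:ℕ)
      + (634151049107395/576460752303423488)*(x^(3:ℕ) + (64)*t^(6:ℕ))^(2:ℕ)
      + (1081125488404461/72057594037927936)*((-1)*x^(5:ℕ) + x^(4:ℕ))^(2:ℕ)
      + (1153315339970403/288230376151711744)*(x^(6:ℕ) + x^(4:ℕ))^(2:ℕ)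
      + (945681194444909/576460752303423488)*(x^(4:ℕ) + (-4)*t^(2:ℕ))^(2:ℕ)
      + (4559860767068815/288230376151711744)*(x^(4:ℕ) + (4)*x*t^(2:ℕ))^(2:ℕ)
      + (45504840838613033/8646911284551352320)*(x^(4:ℕ) + (-4)*x^(2:ℕ)*t^(2:ℕ))^(2:ℕ)
      + (5459463184294865/864691128455135232)*(x^(4:ℕ) + (-4)*x^(3:ℕ)*t^(2:ℕ))^(2:ℕ)
      + (81213288534702445/5188146770730811392)*((4)*x^(4:ℕ)*t^(2:ℕ) + x^(4:ℕ))^(2:ℕ)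
      + (12298776859274317/576460752303423488)*(x^(4:ℕ) + (16)*t^(4:ℕ))^(2:ℕ)
      + (3655962636888789/576460752303423488)*(x^(4:ℕ) + (16)*x*t^(4:ℕ))^(2:ℕ)
      + (183049066664435371/8646911284551352320)*(x^(4:ℕ) + (-16)*x^(2:ℕ)*t^(4:ℕ))^(2:ℕ)
      + (152034248638931/16888498602639360)*(x^(4:ℕ) + (64)*t^(6:ℕ))^(2:ℕ)
      + (6855191280757607/576460752303423488)*((-1)*x^(6:ℕ) + x^(5:ℕ))^(2:ℕ)
      + (2942788885813093/576460752303423488)*(x^(5:ℕ) + (-4)*t^(2:ℕ))^(2:ℕ)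
      + (18479393156243243/8646911284551352320)*(x^(5:ℕ) + (-4)*x*t^(2:ℕ))^(2:ℕ)
      + (2584842151683367/1729382256910270464)*(x^(5:ℕ) + (-4)*x^(2:ℕ)*t^(2:ℕ))^(2:ℕ)
      + (60411193978698427/5188146770730811392)*(x^(5:ℕ) + (4)*x^(3:ℕ)*t^(2:ℕ))^(2:ℕ)
      + (1701753928368343/144115188075855872)*(x^(5:ℕ) + (-4)*x^(4:ℕ)*t^(2:ℕ))^(2:ℕ)
      + (2706597205601547/576460752303423488)*(x^(5:ℕ) + (-16)*t^(4:ℕ))^(2:ℕ)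
      + (9565956619559363/4323455642275676160)*(x^(5:ℕ) + (-16)*x*t^(4:ℕ))^(2:ℕ)
      + (21155067411863/576460752303423488)*(x^(5:ℕ) + (16)*x^(2:ℕ)*t^(4:ℕ))^(2:ℕ)
      + (5831281471010017/576460752303423488)*(x^(5:ℕ) + (-64)*t^(6:ℕ))^(2:ℕ)
      + (85445990812619/67553994410557440)*(x^(6:ℕ) + (4)*t^(2:ℕ))^(2:ℕ)
      + (1003906649243581/432345564227567616)*(x^(6:ℕ) + (-4)*x*t^(2:ℕ))^(2:ℕ)
      + (24177506629060759/5188146770730811392)*(x^(6:ℕ) + (4)*x^(2:ℕ)*t^(2:ℕ))^(2:ℕ)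
      + (4784762053557057/576460752303423488)*(x^(6:ℕ) + (-4)*x^(3:ℕ)*t^(2:ℕ))^(2:ℕ)
      + (2869369940607761/864691128455135232)*(x^(6:ℕ) + (4)*x^(4:ℕ)*t^(2:ℕ))^(2:ℕ)
      + (500754839449151/2161727821137838080)*(x^(6:ℕ) + (16)*t^(4:ℕ))^(2:ℕ)
      + (1412247066994147/288230376151711744)*(x^(6:ℕ) + (-16)*x*t^(4:ℕ))^(2:ℕ)
      + (13831253526882583/2882303761517117440)*(x^(6:ℕ) + (16)*x^(2:ℕ)*t^(4:ℕ))^(2:ℕ)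
      + (2025438355372481/576460752303423488)*(x^(6:ℕ) + (64)*t^(6:ℕ))^(2:ℕ)
      + (107803501384862183/180143985094819840)*(x*t^(2:ℕ) + t^(2:ℕ))^(2:ℕ)
      + (914593473260565707/1080863910568919040)*(x^(2:ℕ)*t^(2:ℕ) + t^(2:ℕ))^(2:ℕ)
      + (42013217786087695/36028797018963968)*((-1)*x^(3:ℕ)*t^(2:ℕ) + t^(2:ℕ))^(2:ℕ)
      + (67856442634610433/72057594037927936)*((-1)*x^(4:ℕ)*t^(2:ℕ) + t^(2:ℕ))^(2:ℕ)
      + (145209465015296809/504403158265495552)*((4)*t^(4:ℕ) + t^(2:ℕ))^(2:ℕ)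
      + (54906994124916311/72057594037927936)*((4)*x*t^(4:ℕ) + t^(2:ℕ))^(2:ℕ)
      + (44457651665137333/1080863910568919040)*((-4)*x^(2:ℕ)*t^(4:ℕ) + t^(2:ℕ))^(2:ℕ)
      + (74018547602448371/180143985094819840)*((16)*t^(6:ℕ) + t^(2:ℕ))^(2:ℕ)
      + (7101411910502141/36028797018963968)*(x^(2:ℕ)*t^(2:ℕ) + x*t^(2:ℕ))^(2:ℕ)
      + (4622670142563721/36028797018963968)*((-1)*x^(3:ℕ)*t^(2:ℕ) + x*t^(2:ℕ))^(2:ℕ)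
      + (62802764405999/562949953421312)*((-1)*x^(4:ℕ)*t^(2:ℕ) + x*t^(2:ℕ))^(2:ℕ)
      + (2756616806254605/18014398509481984)*(x*t^(2:ℕ) + (4)*t^(4:ℕ))^(2:ℕ)
      + (2193652194809627/67553994410557440)*((4)*x*t^(4:ℕ) + x*t^(2:ℕ))^(2:ℕ)
      + (113464336589355/2251799813685248)*((4)*x^(2:ℕ)*t^(4:ℕ) + x*t^(2:ℕ))^(2:ℕ)
      + (2006163451934331/9007199254740992)*(x*t^(2:ℕ) + (-16)*t^(6:ℕ))^(2:ℕ)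
      + (14483467534619629/36028797018963968)*((-1)*x^(3:ℕ)*t^(2:ℕ) + x^(2:ℕ)*t^(2:ℕ))^(2:ℕ)
      + (16405452968794697/1080863910568919040)*((-1)*x^(4:ℕ)*t^(2:ℕ) + x^(2:ℕ)*t^(2:ℕ))^(2:ℕ)
      + (1139571605610985607/1080863910568919040)*(x^(2:ℕ)*t^(2:ℕ) + (4)*t^(4:ℕ))^(2:ℕ)
      + (33733910788566025/72057594037927936)*(x^(2:ℕ)*t^(2:ℕ) + (4)*x*t^(4:ℕ))^(2:ℕ)
      + (22752643830223921/1080863910568919040)*((-4)*x^(2:ℕ)*t^(4:ℕ) + x^(2:ℕ)*t^(2:ℕ))^(2:ℕ)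
      + (2300308105643383/9007199254740992)*(x^(2:ℕ)*t^(2:ℕ) + (16)*t^(6:ℕ))^(2:ℕ)
      + (7885042984728197/36028797018963968)*(x^(4:ℕ)*t^(2:ℕ) + x^(3:ℕ)*t^(2:ℕ))^(2:ℕ)
      + (17391917374004149/18014398509481984)*(x^(3:ℕ)*t^(2:ℕ) + (-4)*t^(4:ℕ))^(2:ℕ)
      + (393706251087468083/540431955284459520)*(x^(3:ℕ)*t^(2:ℕ) + (-4)*x*t^(4:ℕ))^(2:ℕ)
      + (1538006848315475/18014398509481984)*(x^(3:ℕ)*t^(2:ℕ) + (4)*x^(2:ℕ)*t^(4:ℕ))^(2:ℕ)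
      + (10327974405059113/36028797018963968)*(x^(3:ℕ)*t^(2:ℕ) + (-16)*t^(6:ℕ))^(2:ℕ)
      + (1006125677610878071/1080863910568919040)*(x^(4:ℕ)*t^(2:ℕ) + (-4)*t^(4:ℕ))^(2:ℕ)
      + (13141705065238497/72057594037927936)*(x^(4:ℕ)*t^(2:ℕ) + (4)*x*t^(4:ℕ))^(2:ℕ)
      + (14412958055860573/72057594037927936)*(x^(4:ℕ)*t^(2:ℕ) + (-4)*x^(2:ℕ)*t^(4:ℕ))^(2:ℕ)
      + (3105255408085389/22517998136852480)*(x^(4:ℕ)*t^(2:ℕ) + (16)*t^(6:ℕ))^(2:ℕ)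
      + (22696487248465191/2251799813685248)*(x*t^(4:ℕ) + t^(4:ℕ))^(2:ℕ)
      + (67182171241485/2251799813685248)*(x^(2:ℕ)*t^(4:ℕ) + t^(4:ℕ))^(2:ℕ)
      + (9863143053130685/3377699720527872)*((4)*t^(6:ℕ) + t^(4:ℕ))^(2:ℕ)
      + (11705437546483679/4503599627370496)*((-1)*x^(2:ℕ)*t^(4:ℕ) + x*t^(4:ℕ))^(2:ℕ)
      + (341271469747247/1125899906842624)*(x*t^(4:ℕ) + (-4)*t^(6:ℕ))^(2:ℕ)
      + (2113515902749943/2251799813685248)*(x^(2:ℕ)*t^(4:ℕ) + (4)*t^(6:ℕ))^(2:ℕ)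
      + (270831723/17179869184)*(x*t + t)^(2:ℕ)
      + (14509896161/618475290624)*(x^(2:ℕ)*t + t)^(2:ℕ)
      + (8121943/402653184)*(x^(3:ℕ)*t + t)^(2:ℕ)
      + (759057591/137438953472)*(x^(4:ℕ)*t + t)^(2:ℕ)
      + (3048761591/137438953472)*(x^(5:ℕ)*t + t)^(2:ℕ)
      + (1402830623/68719476736)*((-4)*t^(3:ℕ) + t)^(2:ℕ)
      + (563682027/42949672960)*((-4)*x*t^(3:ℕ) + t)^(2:ℕ)
      + (27216444211/2061584302080)*((4)*x^(2:ℕ)*t^(3:ℕ) + t)^(2:ℕ)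
      + (716257625/68719476736)*((-4)*x^(3:ℕ)*t^(3:ℕ) + t)^(2:ℕ)
      + (16473788675/962072674304)*((16)*t^(5:ℕ) + t)^(2:ℕ)
      + (3542679085/137438953472)*((16)*x*t^(5:ℕ) + t)^(2:ℕ)
      + (326106031595587/27021597764222976)*(x^(2:ℕ)*t + x*t)^(2:ℕ)
      + (1383179953051/17592186044416)*((-1)*x^(3:ℕ)*t + x*t)^(2:ℕ)
      + (498817292066929/18014398509481984)*((-1)*x^(4:ℕ)*t + x*t)^(2:ℕ)
      + (13467898492336351/270215977642229760)*((-1)*x^(5:ℕ)*t + x*t)^(2:ℕ)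
      + (4369065361286893/45035996273704960)*(x*t + (4)*t^(3:ℕ))^(2:ℕ)
      + (808747083016873/16888498602639360)*((-4)*x*t^(3:ℕ) + x*t)^(2:ℕ)
      + (91983041280997/18014398509481984)*((4)*x^(2:ℕ)*t^(3:ℕ) + x*t)^(2:ℕ)
      + (694557478196481/9007199254740992)*((-4)*x^(3:ℕ)*t^(3:ℕ) + x*t)^(2:ℕ)
      + (577572569577645/18014398509481984)*(x*t + (16)*t^(5:ℕ))^(2:ℕ)
      + (2140314546063707/270215977642229760)*((16)*x*t^(5:ℕ) + x*t)^(2:ℕ)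
      + (1578772952378987/72057594037927936)*(x^(3:ℕ)*t + x^(2:ℕ)*t)^(2:ℕ)
      + (27179291484382297/2161727821137838080)*(x^(4:ℕ)*t + x^(2:ℕ)*t)^(2:ℕ)
      + (63945963828925687/864691128455135232)*(x^(5:ℕ)*t + x^(2:ℕ)*t)^(2:ℕ)
      + (312486823385429867/4323455642275676160)*(x^(2:ℕ)*t + (4)*t^(3:ℕ))^(2:ℕ)
      + (30513849485674575/288230376151711744)*(x^(2:ℕ)*t + (4)*x*t^(3:ℕ))^(2:ℕ)
      + (33140248509986495/288230376151711744)*((4)*x^(2:ℕ)*t^(3:ℕ) + x^(2:ℕ)*t)^(2:ℕ)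
      + (12350776338822917/288230376151711744)*((4)*x^(3:ℕ)*t^(3:ℕ) + x^(2:ℕ)*t)^(2:ℕ)
      + (65297131796230543/4323455642275676160)*(x^(2:ℕ)*t + (-16)*t^(5:ℕ))^(2:ℕ)
      + (9921234856122215/144115188075855872)*(x^(2:ℕ)*t + (-16)*x*t^(5:ℕ))^(2:ℕ)
      + (3549959236939699/54043195528445952)*(x^(4:ℕ)*t + x^(3:ℕ)*t)^(2:ℕ)
      + (79669133935178659/648518346341351424)*((-1)*x^(5:ℕ)*t + x^(3:ℕ)*t)^(2:ℕ)
      + (4420030498942047/72057594037927936)*(x^(3:ℕ)*t + (-4)*t^(3:ℕ))^(2:ℕ)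
      + (4409038910424997/72057594037927936)*(x^(3:ℕ)*t + (-4)*x*t^(3:ℕ))^(2:ℕ)
      + (317736895897229/72057594037927936)*(x^(3:ℕ)*t + (4)*x^(2:ℕ)*t^(3:ℕ))^(2:ℕ)
      + (108540351257649353/1080863910568919040)*((-4)*x^(3:ℕ)*t^(3:ℕ) + x^(3:ℕ)*t)^(2:ℕ)
      + (7839228957051979/72057594037927936)*(x^(3:ℕ)*t + (16)*t^(5:ℕ))^(2:ℕ)
      + (7245600605366593/540431955284459520)*(x^(3:ℕ)*t + (16)*x*t^(5:ℕ))^(2:ℕ)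
      + (9958738285486879/72057594037927936)*(x^(5:ℕ)*t + x^(4:ℕ)*t)^(2:ℕ)
      + (11073546432340509/144115188075855872)*(x^(4:ℕ)*t + (-4)*t^(3:ℕ))^(2:ℕ)
      + (5000911605392491/144115188075855872)*(x^(4:ℕ)*t + (-4)*x*t^(3:ℕ))^(2:ℕ)
      + (27169129616258767/1080863910568919040)*(x^(4:ℕ)*t + (4)*x^(2:ℕ)*t^(3:ℕ))^(2:ℕ)
      + (14931528634606335/144115188075855872)*(x^(4:ℕ)*t + (4)*x^(3:ℕ)*t^(3:ℕ))^(2:ℕ)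
      + (109217003942904049/1080863910568919040)*(x^(4:ℕ)*t + (-16)*t^(5:ℕ))^(2:ℕ)
      + (7031291803046063/144115188075855872)*(x^(4:ℕ)*t + (16)*x*t^(5:ℕ))^(2:ℕ)
      + (15288745160552861/288230376151711744)*(x^(5:ℕ)*t + (4)*t^(3:ℕ))^(2:ℕ)
      + (352107045569231987/4323455642275676160)*(x^(5:ℕ)*t + (-4)*x*t^(3:ℕ))^(2:ℕ)
      + (27316310613577061/288230376151711744)*(x^(5:ℕ)*t + (4)*x^(2:ℕ)*t^(3:ℕ))^(2:ℕ)
      + (150081754463521559/1441151880758558720)*(x^(5:ℕ)*t + (-4)*x^(3:ℕ)*t^(3:ℕ))^(2:ℕ)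
      + (28424920758634593/288230376151711744)*(x^(5:ℕ)*t + (16)*t^(5:ℕ))^(2:ℕ)
      + (1092075227584907/18014398509481984)*(x^(5:ℕ)*t + (-16)*x*t^(5:ℕ))^(2:ℕ)
      + (462853361047307/18014398509481984)*((-1)*x*t^(3:ℕ) + t^(3:ℕ))^(2:ℕ)
      + (309878086516714337/270215977642229760)*(x^(2:ℕ)*t^(3:ℕ) + t^(3:ℕ))^(2:ℕ)
      + (24474590777440767/18014398509481984)*((-1)*x^(3:ℕ)*t^(3:ℕ) + t^(3:ℕ))^(2:ℕ)
      + (33116343744412037/90071992547409920)*((4)*t^(5:ℕ) + t^(3:ℕ))^(2:ℕ)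
      + (3309419746621307/4503599627370496)*((4)*x*t^(5:ℕ) + t^(3:ℕ))^(2:ℕ)
      + (6252161644016379/18014398509481984)*((-1)*x^(2:ℕ)*t^(3:ℕ) + x*t^(3:ℕ))^(2:ℕ)
      + (292590610766792491/270215977642229760)*((-1)*x^(3:ℕ)*t^(3:ℕ) + x*t^(3:ℕ))^(2:ℕ)
      + (2755170226175643/18014398509481984)*(x*t^(3:ℕ) + (4)*t^(5:ℕ))^(2:ℕ)
      + (885431736901585/2251799813685248)*((4)*x*t^(5:ℕ) + x*t^(3:ℕ))^(2:ℕ)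
      + (16524626863575821/18014398509481984)*(x^(3:ℕ)*t^(3:ℕ) + x^(2:ℕ)*t^(3:ℕ))^(2:ℕ)
      + (11229344293970339/18014398509481984)*(x^(2:ℕ)*t^(3:ℕ) + (4)*t^(5:ℕ))^(2:ℕ)
      + (4485343800457871/9007199254740992)*(x^(2:ℕ)*t^(3:ℕ) + (-4)*x*t^(5:ℕ))^(2:ℕ)
      + (9939875597201647/18014398509481984)*(x^(3:ℕ)*t^(3:ℕ) + (-4)*t^(5:ℕ))^(2:ℕ)
      + (98681669188678121/90071992547409920)*(x^(3:ℕ)*t^(3:ℕ) + (-4)*x*t^(5:ℕ))^(2:ℕ)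
      + (6167895035891795/281474976710656)*(x*t^(5:ℕ) + t^(5:ℕ))^(2:ℕ)
      + (11026306802689/12369505812480)*((1))^(2:ℕ)
      + (19444584672768498343/22698142121947299840)*(x)^(2:ℕ)
      + (37923700252948026647/45396284243894599680)*(x^(2:ℕ))^(2:ℕ)
      + (47531556832026132191/60528378991859466240)*(x^(3:ℕ))^(2:ℕ)
      + (69627872071355536121/90792568487789199360)*(x^(4:ℕ))^(2:ℕ)
      + (152858602063045520497/181585136975578398720)*(x^(5:ℕ))^(2:ℕ)
      + (76860958006195323827/90792568487789199360)*(x^(6:ℕ))^(2:ℕ)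
      + (51653334574071561283/5674535530486824960)*(t^(2:ℕ))^(2:ℕ)
      + (19421301765111289139/1621295865853378560)*(x*t^(2:ℕ))^(2:ℕ)
      + (5936643630379158841/540431955284459520)*(x^(2:ℕ)*t^(2:ℕ))^(2:ℕ)
      + (8357313577252100861/810647932926689280)*(x^(3:ℕ)*t^(2:ℕ))^(2:ℕ)
      + (8608847394055914293/810647932926689280)*(x^(4:ℕ)*t^(2:ℕ))^(2:ℕ)
      + (4768836935650414451/31525197391593472)*(t^(4:ℕ))^(2:ℕ)
      + (4036445140728398113/22517998136852480)*(x*t^(4:ℕ))^(2:ℕ)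
      + (2767139944495048865/13510798882111488)*(x^(2:ℕ)*t^(4:ℕ))^(2:ℕ)
      + (9346853789123703113/2955487255461888)*(t^(6:ℕ))^(2:ℕ)
      + (147752757340003/43293270343680)*(t)^(2:ℕ)
      + (2522103682120155253/810647932926689280)*(x*t)^(2:ℕ)
      + (38581091268656734943/12970366926827028480)*(x^(2:ℕ)*t)^(2:ℕ)
      + (9372996814335167641/3242591731706757120)*(x^(3:ℕ)*t)^(2:ℕ)
      + (9511883808308090659/3242591731706757120)*(x^(4:ℕ)*t)^(2:ℕ)
      + (6692568617789627267/2594073385365405696)*(x^(5:ℕ)*t)^(2:ℕ)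
      + (94811505176704604009/1891511843495608320)*(t^(3:ℕ))^(2:ℕ)
      + (13311334499777467729/270215977642229760)*(x*t^(3:ℕ))^(2:ℕ)
      + (4520221033966625719/90071992547409920)*(x^(2:ℕ)*t^(3:ℕ))^(2:ℕ)
      + (4090464905165974139/90071992547409920)*(x^(3:ℕ)*t^(3:ℕ))^(2:ℕ)
      + (18450150164034913447/23643898043695104)*(t^(5:ℕ))^(2:ℕ)
      + (3367810716830517239/4222124650659840)*(x*t^(5:ℕ))^(2:ℕ)) := by
      unfold H2; ring
    rw [e]; positivity
  linarith

/-- the second-order non-symmetric rogue wave satisfies `|q^[2](x,t)| < 5`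
everywhere: its maximal amplification is strictly smaller than the factor `5` of the
symmetric second-order Akhmediev–Peregrine solution. -/
theorem qtwo_amplitude_lt_five : ∀ x t : ℝ, ‖qtwo (x, t)‖ < 5 := by
  intro x t
  have hH := H2_pos x t
  have hne : ((H2 x t : ℝ) : ℂ) ≠ 0 := Complex.ofReal_ne_zero.mpr hH.ne'
  have h2c : ((Real.sqrt 2 : ℝ) : ℂ) ^ 2 = 2 := by
    rw [← Complex.ofReal_pow, Real.sq_sqrt (by norm_num : (0:ℝ) ≤ 2)]
    norm_num
  have e1 : ((Real.sqrt 2 : ℝ) : ℂ) * F2 x t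
      = ((-24*(48*x^2*t^2 - 4*x^3 + 6*x^2 + 160*t^4 - 48*x*t^2 + 48*t^2 + 2*x^4 - 3*x) : ℝ) : ℂ) + ((24*(12*t - 32*t^3 - 12*x*t + 16*x^3*t + 64*t^3*x - 8*x^4*t - 64*x^2*t^3 - 128*t^5) : ℝ) : ℂ) * Complex.I := by
    unfold F2
    push_cast
    linear_combination (12*Complex.I*(((12*(t:ℂ) - 32*(t:ℂ)^3 - 12*(x:ℂ)*(t:ℂ) + 16*(x:ℂ)^3*(t:ℂ) + 64*(t:ℂ)^3*(x:ℂ) - 8*(x:ℂ)^4*(t:ℂ) - 64*(x:ℂ)^2*(t:ℂ)^3 - 128*(t:ℂ)^5)) + Complex.I*((48*(x:ℂ)^2*(t:ℂ)^2 - 4*(x:ℂ)^3 + 6*(x:ℂ)^2 + 160*(t:ℂ)^4 - 48*(x:ℂ)*(t:ℂ)^2 + 48*(t:ℂ)^2 + 2*(x:ℂ)^4 - 3*(x:ℂ))))) * h2c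
      + (24*((48*(x:ℂ)^2*(t:ℂ)^2 - 4*(x:ℂ)^3 + 6*(x:ℂ)^2 + 160*(t:ℂ)^4 - 48*(x:ℂ)*(t:ℂ)^2 + 48*(t:ℂ)^2 + 2*(x:ℂ)^4 - 3*(x:ℂ)))) * Complex.I_sq
  have hpre : ((Real.sqrt 2 : ℝ) : ℂ)
        * (((Real.sqrt 2 / 2 : ℝ) : ℂ) + F2 x t / ((H2 x t : ℝ) : ℂ))
      = (((H2 x t - 24*(48*x^2*t^2 - 4*x^3 + 6*x^2 + 160*t^4 - 48*x*t^2 + 48*t^2 + 2*x^4 - 3*x))/H2 x t : ℝ) : ℂ)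
        + (((24*(12*t - 32*t^3 - 12*x*t + 16*x^3*t + 64*t^3*x - 8*x^4*t - 64*x^2*t^3 - 128*t^5))/H2 x t : ℝ) : ℂ) * Complex.I := by
    rw [mul_add, ← mul_div_assoc, e1]
    push_cast
    field_simp
    linear_combination (((H2 x t : ℝ) : ℂ)) * h2c
  have habs : ‖qtwo (x, t)‖ ^ 2
      = ((H2 x t - 24*(48*x^2*t^2 - 4*x^3 + 6*x^2 + 160*t^4 - 48*x*t^2 + 48*t^2 + 2*x^4 - 3*x))/H2 x t)^2 + ((24*(12*t - 32*t^3 - 12*x*t + 16*x^3*t + 64*t^3*x - 8*x^4*t - 64*x^2*t^3 - 128*t^5))/H2 x t)^2 := by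
    show ‖qtwo (x, t)‖ ^ 2 = _
    unfold qtwo
    simp only [norm_mul, Complex.norm_exp]
    have hre : (2 * Complex.I * ((t : ℝ) : ℂ)).re = 0 := by simp
    rw [hre, Real.exp_zero, mul_one, ← norm_mul, hpre]
    rw [Complex.sq_norm, Complex.normSq_add_mul_I]
  have hsq : ‖qtwo (x, t)‖ ^ 2 < 25 := by
    rw [habs]
    have hk := key_ineq x t
    have hpos : (0:ℝ) < (H2 x t)^2 := by positivity
    rw [div_pow, div_pow, ← add_div, div_lt_iff₀ hpos]
    linarith
  nlinarith [norm_nonneg (qtwo (x, t)), hsq]
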